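/- Let ζ ∈ (0,1) and k ≥ 1 be an integer. Then Γ((k+1)ζ) ≤ (1-ζ)^{-kζ} · Γ(kζ), where Γ is the Gamma function. -/

import Mathlib

open Real Set MeasureTheory

theorem gamma_growth (ζ : ℝ) (hζ0 : 0 < ζ) (hζ1 : ζ < 1) (k : ℕ) (hk : 1 ≤ k) :
    Real.Gamma (((k : ℝ) + 1) * ζ) ≤ (1 - ζ) ^ (-((k : ℝ) * ζ)) * Real.Gamma ((k : ℝ) * ζ) := by
  have hkpos : (0 : ℝ) < k := by exact_mod_cast hk
  have hkζ : 0 < (k : ℝ) * ζ := by positivity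
  have hr : 0 < 1 - ζ := by linarith
  have h1 : Real.Gamma (((k : ℝ) + 1) * ζ) =
      ∫ x in Ioi (0:ℝ), exp (-x) * x ^ (((k : ℝ) + 1) * ζ - 1) :=
    Real.Gamma_eq_integral (by positivity)
  have h2 : ∫ t in Ioi (0:ℝ), t ^ ((k : ℝ) * ζ - 1) * exp (-((1 - ζ) * t))
      = (1 / (1 - ζ)) ^ ((k : ℝ) * ζ) * Real.Gamma ((k : ℝ) * ζ) :=
    Real.integral_rpow_mul_exp_neg_mul_Ioi hkζ hr
  have hint : IntegrableOn (fun t : ℝ => t ^ ((k : ℝ) * ζ - 1) * exp (-((1 - ζ) * t)))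
      (Ioi 0) := by
    have := integrableOn_rpow_mul_exp_neg_mul_rpow
      (by linarith : (-1 : ℝ) < (k : ℝ) * ζ - 1) (one_pos (α := ℝ)) hr
    simpa [rpow_one, show ∀ t:ℝ, -((1-ζ)*t) = (ζ-1)*t from fun t => by ring] using this
  have hmono : ∫ x in Ioi (0:ℝ), exp (-x) * x ^ (((k : ℝ) + 1) * ζ - 1)
      ≤ ∫ t in Ioi (0:ℝ), t ^ ((k : ℝ) * ζ - 1) * exp (-((1 - ζ) * t)) := by
    refine setIntegral_mono_on ?_ hint measurableSet_Ioi ?_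
    · have := Real.GammaIntegral_convergent (s := ((k : ℝ) + 1) * ζ) (by positivity)
      simpa using this
    · intro x hx
      have hx0 : 0 < x := hx
      have key : x ^ ζ ≤ exp (ζ * x) := by
        calc x ^ ζ ≤ (exp x) ^ ζ :=
              Real.rpow_le_rpow hx0.le (le_trans (by linarith [add_one_le_exp x]) le_rfl) hζ0.le
          _ = exp (ζ * x) := by rw [← Real.exp_mul, mul_comm]
      calc exp (-x) * x ^ (((k : ℝ) + 1) * ζ - 1)
          = x ^ ((k : ℝ) * ζ - 1) * (exp (-x) * x ^ ζ) := by
            rw [show ((k:ℝ)+1)*ζ-1 = ((k:ℝ)*ζ-1)+ζ by ring, Real.rpow_add hx0]; ring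
        _ ≤ x ^ ((k : ℝ) * ζ - 1) * (exp (-x) * exp (ζ * x)) := by
            have h := mul_le_mul_of_nonneg_left key (exp_pos (-x)).le
            exact mul_le_mul_of_nonneg_left h (rpow_nonneg hx0.le _)
        _ = x ^ ((k : ℝ) * ζ - 1) * exp (-((1 - ζ) * x)) := by
            rw [← Real.exp_add]; ring_nf
  have hpow : (1 / (1 - ζ)) ^ ((k : ℝ) * ζ) = (1 - ζ) ^ (-((k : ℝ) * ζ)) := by
    rw [one_div, Real.inv_rpow hr.le, Real.rpow_neg hr.le]
  calc Real.Gamma (((k : ℝ) + 1) * ζ) ≤ _ := h1 ▸ hmono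
    _ = (1 - ζ) ^ (-((k : ℝ) * ζ)) * Real.Gamma ((k : ℝ) * ζ) := by rw [h2, hpow]
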